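/- arXiv:2301.13323 — 4 statements merged into one kernel-verified Lean document; each statement's English description precedes it below -/
import Mathlib

section
/- Let P and Q be probability measures and f measurable with 0 ≤ f ≤ C. Then |E_Q[f] - E_P[f]| ≤ √2 · C · d_JS(P, Q), where d_JS(P,Q) = √(D_JS(P‖Q)) is the Jensen–Shannon distance. -/
open MeasureTheory ProbabilityTheory Real
open scoped ENNReal

/-- Kullback–Leibler divergence (natural log), as a real number. -/
noncomputable def klDiv {α : Type*} [MeasurableSpace α] (P Q : Measure α) : ℝ :=
  ∫ x, Real.log ((P.rnDeriv Q) x).toReal ∂P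

/-- The midpoint (mixture) measure (P + Q)/2. -/
noncomputable def midM {α : Type*} [MeasurableSpace α] (P Q : Measure α) : Measure α :=
  (2⁻¹ : ℝ≥0∞) • (P + Q)

/-- Jensen–Shannon divergence. -/
noncomputable def jsDiv {α : Type*} [MeasurableSpace α] (P Q : Measure α) : ℝ :=
  2⁻¹ * klDiv P (midM P Q) + 2⁻¹ * klDiv Q (midM P Q)

/-- Jensen–Shannon distance. -/
noncomputable def jsDist {α : Type*} [MeasurableSpace α] (P Q : Measure α) : ℝ :=
  Real.sqrt (jsDiv P Q)


private lemma hasDerivAt_F (t : ℝ) (h1 : -1 < t) (h2 : t < 1) :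
    HasDerivAt (fun t : ℝ => (1+t) * Real.log (1+t) + (1-t) * Real.log (1-t) - t^2)
      (Real.log (1+t) - Real.log (1-t) - 2*t) t := by
  have h1' : (0:ℝ) < 1 + t := by linarith
  have h2' : (0:ℝ) < 1 - t := by linarith
  have d1 : HasDerivAt (fun t : ℝ => (1+t) * Real.log (1+t)) (Real.log (1+t) + 1) t := by
    have hl : HasDerivAt (fun t : ℝ => Real.log (1+t)) (1/(1+t)) t := by
      simpa [Function.comp_def] using (Real.hasDerivAt_log h1'.ne').comp t ((hasDerivAt_id t).const_add 1)
    have := ((hasDerivAt_id t).const_add 1).mul hl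
    refine this.congr_deriv ?_
    field_simp
    simp only [id_eq]
    ring
  have d2 : HasDerivAt (fun t : ℝ => (1-t) * Real.log (1-t)) (-Real.log (1-t) - 1) t := by
    have hl : HasDerivAt (fun t : ℝ => Real.log (1-t)) (-(1/(1-t))) t := by
      simpa [Function.comp_def] using (Real.hasDerivAt_log h2'.ne').comp t ((hasDerivAt_id t).neg.const_add 1)
    have := (((hasDerivAt_id t).neg.const_add 1)).mul hl
    refine this.congr_deriv ?_
    field_simp
    simp only [id_eq, Pi.neg_apply]
    ring
  have d3 : HasDerivAt (fun t : ℝ => t^2) (2*t) t := by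
    simpa using (hasDerivAt_pow 2 t)
  refine ((d1.add d2).sub d3).congr_deriv ?_
  ring

private lemma hasDerivAt_G (t : ℝ) (h1 : -1 < t) (h2 : t < 1) :
    HasDerivAt (fun t : ℝ => Real.log (1+t) - Real.log (1-t) - 2*t)
      (1/(1+t) + 1/(1-t) - 2) t := by
  have h1' : (0:ℝ) < 1 + t := by linarith
  have h2' : (0:ℝ) < 1 - t := by linarith
  have hl1 : HasDerivAt (fun t : ℝ => Real.log (1+t)) (1/(1+t)) t := by
    simpa [Function.comp_def] using (Real.hasDerivAt_log h1'.ne').comp t ((hasDerivAt_id t).const_add 1)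
  have hl2 : HasDerivAt (fun t : ℝ => Real.log (1-t)) (-(1/(1-t))) t := by
    simpa [Function.comp_def] using (Real.hasDerivAt_log h2'.ne').comp t ((hasDerivAt_id t).neg.const_add 1)
  have d3 : HasDerivAt (fun t : ℝ => 2*t) 2 t := by
    simpa using (hasDerivAt_id t).const_mul 2
  refine ((hl1.sub hl2).sub d3).congr_deriv ?_
  ring

private lemma G_nonneg {t : ℝ} (h0 : 0 ≤ t) (h1 : t < 1) :
    0 ≤ Real.log (1+t) - Real.log (1-t) - 2*t := by
  set G : ℝ → ℝ := fun t => Real.log (1+t) - Real.log (1-t) - 2*t with hG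
  have hmono : MonotoneOn G (Set.Ico (0:ℝ) 1) := by
    apply monotoneOn_of_deriv_nonneg (convex_Ico 0 1)
    · intro x hx
      exact ((hasDerivAt_G x (by linarith [hx.1]) hx.2).continuousAt).continuousWithinAt
    · intro x hx
      rw [interior_Ico] at hx
      exact ((hasDerivAt_G x (by linarith [hx.1]) hx.2)).differentiableAt.differentiableWithinAt
    · intro x hx
      rw [interior_Ico] at hx
      rw [(hasDerivAt_G x (by linarith [hx.1]) hx.2).deriv]
      have hx1 : (0:ℝ) < 1 + x := by linarith [hx.1]
      have hx2 : (0:ℝ) < 1 - x := by linarith [hx.2]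
      rw [div_add_div _ _ hx1.ne' hx2.ne', sub_nonneg, le_div_iff₀ (by positivity)]
      nlinarith [sq_nonneg x]
  have h := hmono (Set.mem_Ico.mpr ⟨le_refl 0, one_pos⟩) (Set.mem_Ico.mpr ⟨h0, h1⟩) h0
  simpa [hG] using h

private lemma F_nonneg_aux {t : ℝ} (h0 : 0 ≤ t) (h1 : t ≤ 1) :
    t^2 ≤ (1+t) * Real.log (1+t) + (1-t) * Real.log (1-t) := by
  rcases eq_or_lt_of_le h1 with rfl | h1
  · norm_num
    nlinarith [Real.log_two_gt_d9]
  set F : ℝ → ℝ := fun t => (1+t) * Real.log (1+t) + (1-t) * Real.log (1-t) - t^2 with hF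
  have hmono : MonotoneOn F (Set.Ico (0:ℝ) 1) := by
    apply monotoneOn_of_deriv_nonneg (convex_Ico 0 1)
    · intro x hx
      exact ((hasDerivAt_F x (by linarith [hx.1]) hx.2).continuousAt).continuousWithinAt
    · intro x hx
      rw [interior_Ico] at hx
      exact ((hasDerivAt_F x (by linarith [hx.1]) hx.2)).differentiableAt.differentiableWithinAt
    · intro x hx
      rw [interior_Ico] at hx
      rw [(hasDerivAt_F x (by linarith [hx.1]) hx.2).deriv]
      exact G_nonneg hx.1.le hx.2
  have h := hmono (Set.mem_Ico.mpr ⟨le_refl 0, one_pos⟩) (Set.mem_Ico.mpr ⟨h0, h1⟩) h0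
  simp only [hF] at h
  norm_num at h
  linarith

lemma key_pointwise {a b : ℝ} (ha : 0 ≤ a) (hb : 0 ≤ b) (hab : a + b = 2) :
    (1 - a)^2 ≤ a * Real.log a + b * Real.log b := by
  rcases le_total a 1 with h | h
  · have := F_nonneg_aux (t := 1 - a) (by linarith) (by linarith)
    have hb' : b = 1 + (1-a) := by linarith
    have ha' : a = 1 - (1-a) := by ring
    calc (1-a)^2 ≤ (1+(1-a)) * Real.log (1+(1-a)) + (1-(1-a)) * Real.log (1-(1-a)) := this
    _ = a * Real.log a + b * Real.log b := by rw [← ha', ← hb']; ring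
  · have := F_nonneg_aux (t := a - 1) (by linarith) (by linarith)
    have hb' : b = 1 - (a-1) := by linarith
    have ha' : a = 1 + (a-1) := by ring
    calc (1-a)^2 = (a-1)^2 := by ring
    _ ≤ (1+(a-1)) * Real.log (1+(a-1)) + (1-(a-1)) * Real.log (1-(a-1)) := this
    _ = a * Real.log a + b * Real.log b := by rw [← ha', ← hb']


private lemma xlogx_abs_le {y : ℝ} (h0 : 0 ≤ y) (h2 : y ≤ 2) : |y * Real.log y| ≤ 2 := by
  rcases le_total y 1 with h | h
  · rcases eq_or_lt_of_le h0 with rfl | h0'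
    · simp
    · have hlt := Real.abs_log_mul_self_lt y h0' h
      rw [abs_mul] at hlt ⊢
      rw [mul_comm] at *
      linarith [hlt]
  · have hlog0 : 0 ≤ Real.log y := Real.log_nonneg h
    have hle : Real.log y ≤ Real.log 2 := Real.log_le_log (by linarith) h2
    have h2' : Real.log 2 ≤ 1 := by
      have := Real.log_le_sub_one_of_pos (by norm_num : (0:ℝ) < 2); linarith
    rw [abs_of_nonneg (mul_nonneg h0 hlog0)]
    nlinarith

/-- |E_Q[f] - E_P[f]| ≤ √2 · C · d_JS(P, Q) for 0 ≤ f ≤ C. -/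
theorem stmt2 {α : Type*} [MeasurableSpace α] (P Q : Measure α)
    [IsProbabilityMeasure P] [IsProbabilityMeasure Q]
    (f : α → ℝ) (C : ℝ) (hC : 0 < C) (hf : Measurable f)
    (hf0 : ∀ x, 0 ≤ f x) (hfC : ∀ x, f x ≤ C) :
    |∫ x, f x ∂Q - ∫ x, f x ∂P| ≤ Real.sqrt 2 * C * jsDist P Q := by
  set M : Measure α := midM P Q with hM
  have hMuniv : M Set.univ = 1 := by
    rw [hM, midM]
    simp only [Measure.smul_apply, Measure.add_apply, measure_univ, smul_eq_mul]
    rw [one_add_one_eq_two, ENNReal.inv_mul_cancel two_ne_zero ENNReal.ofNat_ne_top]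
  haveI hMP : IsProbabilityMeasure M := ⟨hMuniv⟩
  have h2M : P + Q = (2 : ℝ≥0∞) • M := by
    rw [hM, midM, smul_smul, ENNReal.mul_inv_cancel two_ne_zero ENNReal.ofNat_ne_top, one_smul]
  have hPM : P ≪ M := by
    refine Measure.AbsolutelyContinuous.mk fun s hs h0 => ?_
    have hPQ : (P + Q) s = 0 := by
      have : ((2 : ℝ≥0∞) • M) s = 0 := by simp [Measure.smul_apply, h0]
      rwa [← h2M] at this
    have hadd : P s + Q s = 0 := by simpa [Measure.add_apply] using hPQ
    exact (add_eq_zero.mp hadd).1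
  have hQM : Q ≪ M := by
    refine Measure.AbsolutelyContinuous.mk fun s hs h0 => ?_
    have hPQ : (P + Q) s = 0 := by
      have : ((2 : ℝ≥0∞) • M) s = 0 := by simp [Measure.smul_apply, h0]
      rwa [← h2M] at this
    have hadd : P s + Q s = 0 := by simpa [Measure.add_apply] using hPQ
    exact (add_eq_zero.mp hadd).2
  -- densities
  set p : α → ℝ := fun x => (P.rnDeriv M x).toReal with hpdef
  set q : α → ℝ := fun x => (Q.rnDeriv M x).toReal with hqdef
  have hpm : Measurable p := (Measure.measurable_rnDeriv P M).ennreal_toReal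
  have hqm : Measurable q := (Measure.measurable_rnDeriv Q M).ennreal_toReal
  -- p + q = 2 a.e.
  have hsum : ∀ᵐ x ∂M, p x + q x = 2 := by
    have h1 := Measure.rnDeriv_add P Q M
    have h2 : ((2 : ℝ≥0∞) • M).rnDeriv M =ᵐ[M] fun _ => (2 : ℝ≥0∞) := by
      filter_upwards [Measure.rnDeriv_smul_left_of_ne_top M M (r := 2) ENNReal.ofNat_ne_top,
        Measure.rnDeriv_self M] with x hx hx'
      simp [hx, hx']
    have h3 : (P + Q).rnDeriv M =ᵐ[M] fun _ => (2 : ℝ≥0∞) := by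
      rw [h2M]; exact h2
    have h3' : P.rnDeriv M + Q.rnDeriv M =ᵐ[M] fun _ => (2 : ℝ≥0∞) := h1.symm.trans h3
    filter_upwards [h3', Measure.rnDeriv_lt_top P M, Measure.rnDeriv_lt_top Q M]
      with x hx hxp hxq
    have : (P.rnDeriv M x + Q.rnDeriv M x).toReal = (2 : ℝ≥0∞).toReal := by
      rw [show P.rnDeriv M x + Q.rnDeriv M x = (2 : ℝ≥0∞) from hx]
    rw [ENNReal.toReal_add hxp.ne hxq.ne] at this
    simpa [hpdef, hqdef] using this
  have hbnd : ∀ᵐ x ∂M, p x + q x = 2 ∧ 0 ≤ p x ∧ 0 ≤ q x ∧ p x ≤ 2 ∧ q x ≤ 2 := by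
    filter_upwards [hsum] with x hx
    have h0p : 0 ≤ p x := ENNReal.toReal_nonneg
    have h0q : 0 ≤ q x := ENNReal.toReal_nonneg
    exact ⟨hx, h0p, h0q, by linarith, by linarith⟩
  -- integrals of densities
  have hip : ∫ x, p x ∂M = 1 := by
    rw [hpdef, Measure.integral_toReal_rnDeriv hPM, measureReal_def, measure_univ, ENNReal.toReal_one]
  have hiq : ∫ x, q x ∂M = 1 := by
    rw [hqdef, Measure.integral_toReal_rnDeriv hQM, measureReal_def, measure_univ, ENNReal.toReal_one]
  -- integrability facts
  have i_p : Integrable p M := by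
    refine (integrable_const (2:ℝ)).mono' hpm.aestronglyMeasurable ?_
    filter_upwards [hbnd] with x hx
    rw [Real.norm_eq_abs, abs_of_nonneg hx.2.1]; exact hx.2.2.2.1
  have i_q : Integrable q M := by
    refine (integrable_const (2:ℝ)).mono' hqm.aestronglyMeasurable ?_
    filter_upwards [hbnd] with x hx
    rw [Real.norm_eq_abs, abs_of_nonneg hx.2.2.1]; exact hx.2.2.2.2
  have i_plogp : Integrable (fun x => p x * Real.log (p x)) M := by
    refine (integrable_const (2:ℝ)).mono'
      (hpm.mul (Real.measurable_log.comp hpm)).aestronglyMeasurable ?_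
    filter_upwards [hbnd] with x hx
    exact xlogx_abs_le hx.2.1 hx.2.2.2.1
  have i_qlogq : Integrable (fun x => q x * Real.log (q x)) M := by
    refine (integrable_const (2:ℝ)).mono'
      (hqm.mul (Real.measurable_log.comp hqm)).aestronglyMeasurable ?_
    filter_upwards [hbnd] with x hx
    exact xlogx_abs_le hx.2.2.1 hx.2.2.2.2
  have i_pf : Integrable (fun x => p x * f x) M := by
    refine (integrable_const (2*C)).mono' (hpm.mul hf).aestronglyMeasurable ?_
    filter_upwards [hbnd] with x hx
    rw [Real.norm_eq_abs, abs_mul, abs_of_nonneg hx.2.1, abs_of_nonneg (hf0 x)]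
    exact mul_le_mul hx.2.2.2.1 (hfC x) (hf0 x) (by norm_num)
  have i_qf : Integrable (fun x => q x * f x) M := by
    refine (integrable_const (2*C)).mono' (hqm.mul hf).aestronglyMeasurable ?_
    filter_upwards [hbnd] with x hx
    rw [Real.norm_eq_abs, abs_mul, abs_of_nonneg hx.2.2.1, abs_of_nonneg (hf0 x)]
    exact mul_le_mul hx.2.2.2.2 (hfC x) (hf0 x) (by norm_num)
  have i_abs : Integrable (fun x => |1 - p x|) M := by
    refine (integrable_const (1:ℝ)).mono' (hpm.const_sub 1).abs.aestronglyMeasurable ?_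
    filter_upwards [hbnd] with x hx
    rw [Real.norm_eq_abs, abs_abs]
    rw [abs_le]; constructor <;> [linarith [hx.2.2.2.1]; linarith [hx.2.1]]
  have i_sq : Integrable (fun x => (1 - p x)^2) M := by
    refine (integrable_const (1:ℝ)).mono' ((hpm.const_sub 1).pow_const 2).aestronglyMeasurable ?_
    filter_upwards [hbnd] with x hx
    rw [Real.norm_eq_abs, abs_of_nonneg (sq_nonneg _)]
    nlinarith [hx.2.1, hx.2.2.2.1]
  -- expressing the integrals over P, Q via M
  have hPf : ∫ x, f x ∂P = ∫ x, p x * f x ∂M := by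
    have h := MeasureTheory.integral_rnDeriv_smul hPM (f := f)
    simp only [smul_eq_mul] at h
    simp only [hpdef]
    exact h.symm
  have hQf : ∫ x, f x ∂Q = ∫ x, q x * f x ∂M := by
    have h := MeasureTheory.integral_rnDeriv_smul hQM (f := f)
    simp only [smul_eq_mul] at h
    simp only [hqdef]
    exact h.symm
  have hKLP : klDiv P M = ∫ x, p x * Real.log (p x) ∂M := by
    have h := MeasureTheory.integral_rnDeriv_smul hPM
      (f := fun x => Real.log ((P.rnDeriv M x).toReal))
    simp only [smul_eq_mul] at h
    simp only [klDiv, hpdef]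
    exact h.symm
  have hKLQ : klDiv Q M = ∫ x, q x * Real.log (q x) ∂M := by
    have h := MeasureTheory.integral_rnDeriv_smul hQM
      (f := fun x => Real.log ((Q.rnDeriv M x).toReal))
    simp only [smul_eq_mul] at h
    simp only [klDiv, hqdef]
    exact h.symm
  -- step 1: difference as an integral over M
  have hdiff : ∫ x, f x ∂Q - ∫ x, f x ∂P = ∫ x, (q x - p x) * (f x - C/2) ∂M := by
    have e1 : ∫ x, f x ∂Q - ∫ x, f x ∂P = ∫ x, (q x - p x) * f x ∂M := by
      rw [hPf, hQf, ← integral_sub i_qf i_pf]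
      congr 1; funext x; ring
    have i_qp : Integrable (fun x => q x - p x) M := i_q.sub i_p
    have e2 : ∫ x, (q x - p x) * f x ∂M
        = ∫ x, (q x - p x) * (f x - C/2) ∂M + ∫ x, (C/2) * (q x - p x) ∂M := by
      rw [← integral_add]
      · congr 1; funext x; ring
      · refine (integrable_const (4*C)).mono'
          (((hqm.sub hpm).mul (hf.sub measurable_const))).aestronglyMeasurable ?_
        filter_upwards [hbnd] with x hx
        rw [Real.norm_eq_abs, abs_mul]
        have h1 : |q x - p x| ≤ 4 := by
          rw [abs_le]; constructor <;> nlinarith [hx.2.1, hx.2.2.1, hx.2.2.2.1, hx.2.2.2.2]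
        have h2 : |f x - C/2| ≤ C := by
          rw [abs_le]; constructor <;> [linarith [hf0 x, hC.le]; linarith [hfC x, hC.le]]
        exact mul_le_mul h1 h2 (abs_nonneg _) (by norm_num)
      · exact (i_qp.const_mul _)
    have e3 : ∫ x, (C/2) * (q x - p x) ∂M = 0 := by
      rw [integral_const_mul, integral_sub i_q i_p, hiq, hip]; ring
    rw [e1, e2, e3, add_zero]
  -- step 2: bound the difference by C * ∫ |1 - p|
  have hstep2 : |∫ x, f x ∂Q - ∫ x, f x ∂P| ≤ C * ∫ x, |1 - p x| ∂M := by
    rw [hdiff]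
    calc |∫ x, (q x - p x) * (f x - C/2) ∂M| ≤ ∫ x, |q x - p x| * |f x - C/2| ∂M := by
          simpa [Real.norm_eq_abs, abs_mul] using
            norm_integral_le_integral_norm (fun x => (q x - p x) * (f x - C/2)) (μ := M)
      _ ≤ ∫ x, C * |1 - p x| ∂M := by
          refine integral_mono_ae ?_ (i_abs.const_mul C) ?_
          · refine (integrable_const (4*C)).mono'
              ((((hqm.sub hpm).abs).mul ((hf.sub measurable_const).abs))).aestronglyMeasurable ?_
            filter_upwards [hbnd] with x hx
            rw [Real.norm_eq_abs, abs_of_nonneg (mul_nonneg (abs_nonneg _) (abs_nonneg _))]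
            have h1 : |q x - p x| ≤ 4 := by
              rw [abs_le]; constructor <;> nlinarith [hx.2.1, hx.2.2.1, hx.2.2.2.1, hx.2.2.2.2]
            have h2 : |f x - C/2| ≤ C := by
              rw [abs_le]; constructor <;> [linarith [hf0 x, hC.le]; linarith [hfC x, hC.le]]
            exact mul_le_mul h1 h2 (abs_nonneg _) (by norm_num)
          · filter_upwards [hbnd] with x hx
            have h1 : |q x - p x| = 2 * |1 - p x| := by
              have : q x - p x = 2 * (1 - p x) := by linarith [hx.1]
              rw [this, abs_mul, abs_of_nonneg (by norm_num : (0:ℝ) ≤ 2)]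
            have h2 : |f x - C/2| ≤ C/2 := by
              rw [abs_le]; constructor <;> [linarith [hf0 x]; linarith [hfC x]]
            rw [h1]
            calc 2 * |1 - p x| * |f x - C/2| ≤ 2 * |1 - p x| * (C/2) :=
              mul_le_mul_of_nonneg_left h2 (by positivity)
              _ = C * |1 - p x| := by ring
      _ = C * ∫ x, |1 - p x| ∂M := integral_const_mul C _
  -- step 3: Cauchy-Schwarz
  have hCS : ∫ x, |1 - p x| ∂M ≤ Real.sqrt (∫ x, (1 - p x)^2 ∂M) := by
    have hconj : Real.HolderConjugate 2 2 := Real.holderConjugate_iff.mpr ⟨one_lt_two, by norm_num⟩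
    have hm1 : MemLp (fun x => |1 - p x|) (ENNReal.ofReal 2) M := by
      refine MemLp.of_bound (hpm.const_sub 1).abs.aestronglyMeasurable 1 ?_
      filter_upwards [hbnd] with x hx
      rw [Real.norm_eq_abs, abs_abs, abs_le]
      constructor <;> [linarith [hx.2.2.2.1]; linarith [hx.2.1]]
    have hm2 : MemLp (fun _ : α => (1:ℝ)) (ENNReal.ofReal 2) M := memLp_const 1
    have h := integral_mul_le_Lp_mul_Lq_of_nonneg hconj
      (Filter.Eventually.of_forall fun x => abs_nonneg (1 - p x))
      (Filter.Eventually.of_forall fun _ => zero_le_one) hm1 hm2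
    simp only [mul_one] at h
    have hxx : ∀ y : ℝ, |y| ^ (2:ℝ) = y^2 := fun y => by
      rw [show (2:ℝ) = ((2:ℕ):ℝ) by norm_num, Real.rpow_natCast, sq_abs]
    have e1 : ∫ a, |1 - p a| ^ (2:ℝ) ∂M = ∫ a, (1 - p a)^2 ∂M :=
      integral_congr_ae (Filter.Eventually.of_forall fun a => hxx _)
    have e2 : ∫ _a : α, (1:ℝ) ^ (2:ℝ) ∂M = 1 := by
      simp
    rw [e1, e2, Real.one_rpow, mul_one] at h
    rwa [Real.sqrt_eq_rpow]
  -- step 4: Pinsker-type bound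
  have hstep4 : ∫ x, (1 - p x)^2 ∂M ≤ 2 * jsDiv P Q := by
    have h1 : ∫ x, (1 - p x)^2 ∂M
        ≤ ∫ x, (p x * Real.log (p x) + q x * Real.log (q x)) ∂M := by
      refine integral_mono_ae i_sq (i_plogp.add i_qlogq) ?_
      filter_upwards [hbnd] with x hx
      exact key_pointwise hx.2.1 hx.2.2.1 hx.1
    rw [integral_add i_plogp i_qlogq] at h1
    have h2 : 2 * jsDiv P Q = klDiv P M + klDiv Q M := by
      rw [jsDiv, ← hM]; ring
    rw [h2, hKLP, hKLQ]
    exact h1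
  -- conclusion
  calc |∫ x, f x ∂Q - ∫ x, f x ∂P| ≤ C * ∫ x, |1 - p x| ∂M := hstep2
    _ ≤ C * Real.sqrt (∫ x, (1 - p x)^2 ∂M) := mul_le_mul_of_nonneg_left hCS hC.le
    _ ≤ C * Real.sqrt (2 * jsDiv P Q) :=
        mul_le_mul_of_nonneg_left (Real.sqrt_le_sqrt hstep4) hC.le
    _ = Real.sqrt 2 * C * jsDist P Q := by
        rw [jsDist, Real.sqrt_mul (by norm_num : (0:ℝ) ≤ 2)]; ring
end

section
/- If g : X → Z is a measurable map and P_i^Z, P_j^Z are the pushforwards of probability measures P_i^X, P_j^X under g, then d_JS(P_i^X, P_j^X) ≥ d_JS(P_i^Z, P_j^Z). (Data processing inequality for Jensen–Shannon distance.) -/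
open MeasureTheory ProbabilityTheory Real
open scoped ENNReal

/-- tangent line inequality for `x ↦ x * log x`. -/
lemma log_tangent {x t : ℝ} (hx : 0 ≤ x) (ht : 0 < t) :
    x * (Real.log t + 1) - t ≤ x * Real.log x := by
  rcases hx.eq_or_lt with h | h
  · simp [← h]; linarith
  · have h1 : Real.log (t / x) ≤ t / x - 1 := Real.log_le_sub_one_of_pos (div_pos ht h)
    have h2 : Real.log (t / x) = Real.log t - Real.log x := Real.log_div (ne_of_gt ht) (ne_of_gt h)
    have h3 := mul_le_mul_of_nonneg_left h1 hx
    have h4 : x * (t / x) = t := by field_simp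
    nlinarith

lemma abs_mul_log_le_two {x : ℝ} (h0 : 0 ≤ x) (h2 : x ≤ 2) : |x * Real.log x| ≤ 2 := by
  rcases le_or_gt x 1 with h1 | h1
  · rcases h0.eq_or_lt with h | hx
    · simp [← h]
    · have hl : Real.log x ≤ 0 := Real.log_nonpos h0 h1
      have hub : Real.log x⁻¹ ≤ x⁻¹ - 1 := Real.log_le_sub_one_of_pos (by positivity)
      rw [Real.log_inv] at hub
      rw [abs_of_nonpos (mul_nonpos_of_nonneg_of_nonpos h0 hl)]
      have h3 := mul_le_mul_of_nonneg_left hub h0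
      have hxx : x * x⁻¹ = 1 := mul_inv_cancel₀ (ne_of_gt hx)
      nlinarith
  · have hl0 : 0 ≤ Real.log x := Real.log_nonneg h1.le
    have hl : Real.log x ≤ x - 1 := Real.log_le_sub_one_of_pos (by linarith)
    rw [abs_of_nonneg (mul_nonneg (by linarith) hl0)]
    nlinarith

lemma mul_log_le_of_forall_rat {u c : ℝ} (hu : 0 ≤ u)
    (h : ∀ q : ℚ, 0 < (q : ℝ) → u * (Real.log q + 1) - q ≤ c) :
    u * Real.log u ≤ c := by
  rcases hu.eq_or_lt with h0 | h0
  · rw [← h0, zero_mul]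
    by_contra hc
    push_neg at hc
    obtain ⟨q, hq1, hq2⟩ := exists_rat_btwn (show (0 : ℝ) < -c by linarith)
    have := h q hq1
    rw [← h0] at this
    simp at this
    linarith
  · by_contra hc
    push_neg at hc
    set F : ℝ → ℝ := fun t => u * (Real.log t + 1) - t with hF_def
    have hFu : F u = u * Real.log u := by rw [hF_def]; ring
    have hF : ContinuousAt F u :=
      (continuousAt_const.mul ((Real.continuousAt_log h0.ne').add continuousAt_const)).sub
        continuousAt_id
    have hev : ∀ᶠ t in nhds u, c < F t := hF.eventually (lt_mem_nhds (by rw [hFu]; exact hc))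
    have hev2 : ∀ᶠ t in nhds u, 0 < t := eventually_gt_nhds h0
    obtain ⟨ε, hε, hball⟩ := Metric.eventually_nhds_iff.mp (hev.and hev2)
    obtain ⟨q, hq1, hq2⟩ := exists_rat_btwn (lt_add_of_pos_right u hε)
    have hdist : dist (q : ℝ) u < ε := by
      rw [Real.dist_eq, abs_of_nonneg (by linarith)]; linarith
    obtain ⟨hcq, hq0⟩ := hball hdist
    exact absurd (h q hq0) (not_le.mpr hcq)

lemma integrable_of_ae_bound {α : Type*} [MeasurableSpace α] {μ : Measure α} [IsFiniteMeasure μ]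
    {f : α → ℝ} (hf : AEStronglyMeasurable f μ) {C : ℝ} (h : ∀ᵐ x ∂μ, |f x| ≤ C) :
    Integrable f μ :=
  Integrable.mono' (integrable_const C) hf (h.mono fun x hx => by simpa using hx)

lemma absCont_of_le_smul {α : Type*} [MeasurableSpace α] {P m : Measure α}
    (hle : P ≤ (2 : ℝ≥0∞) • m) : P ≪ m := by
  intro s hs
  have h1 : P s ≤ ((2 : ℝ≥0∞) • m) s := hle s
  rw [Measure.smul_apply, hs] at h1
  simpa using h1

lemma rnDeriv_le_two {α : Type*} [MeasurableSpace α] {P m : Measure α} [SigmaFinite m]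
    (hle : P ≤ (2 : ℝ≥0∞) • m) : P.rnDeriv m ≤ᵐ[m] 2 := by
  refine ae_le_of_forall_setLIntegral_le_of_sigmaFinite (P.measurable_rnDeriv m)
    fun s hs _ => ?_
  have h1 : (∫⁻ x in s, P.rnDeriv m x ∂m) ≤ P s := Measure.setLIntegral_rnDeriv_le s
  have h2 : P s ≤ 2 * m s := by simpa [Measure.smul_apply] using hle s
  calc (∫⁻ x in s, P.rnDeriv m x ∂m) ≤ 2 * m s := h1.trans h2
    _ = ∫⁻ _ in s, (2 : ℝ≥0∞) ∂m := by simp [mul_comm]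

lemma kl_map_le {X Z : Type*} [mX : MeasurableSpace X] [mZ : MeasurableSpace Z]
    (P m : Measure X) [IsProbabilityMeasure P] [IsProbabilityMeasure m]
    (hle : P ≤ (2 : ℝ≥0∞) • m) (g : X → Z) (hg : Measurable g) :
    klDiv (P.map g) (m.map g) ≤ klDiv P m := by
  set Pz := P.map g with hPz_def
  set mz := m.map g with hmz_def
  haveI : IsProbabilityMeasure Pz := Measure.isProbabilityMeasure_map hg.aemeasurable
  haveI : IsProbabilityMeasure mz := Measure.isProbabilityMeasure_map hg.aemeasurable
  have hlez : Pz ≤ (2 : ℝ≥0∞) • mz := by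
    rw [hPz_def, hmz_def, ← Measure.map_smul]
    exact Measure.map_mono hle hg
  have hPm : P ≪ m := absCont_of_le_smul hle
  have hPzmz : Pz ≪ mz := absCont_of_le_smul hlez
  set f : X → ℝ := fun x => (P.rnDeriv m x).toReal with hf_def
  set r : Z → ℝ := fun z => (Pz.rnDeriv mz z).toReal with hr_def
  have hf_meas : Measurable f := (Measure.measurable_rnDeriv _ _).ennreal_toReal
  have hr_meas : Measurable r := (Measure.measurable_rnDeriv _ _).ennreal_toReal
  have hf0 : ∀ x, 0 ≤ f x := fun x => ENNReal.toReal_nonneg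
  have hr0 : ∀ z, 0 ≤ r z := fun z => ENNReal.toReal_nonneg
  have hf2 : ∀ᵐ x ∂m, f x ≤ 2 := (rnDeriv_le_two hle).mono fun x hx => by
    calc f x ≤ (2 : ℝ≥0∞).toReal := ENNReal.toReal_mono (by norm_num) hx
      _ = 2 := by norm_num
  have hr2 : ∀ᵐ z ∂mz, r z ≤ 2 := (rnDeriv_le_two hlez).mono fun z hz => by
    calc r z ≤ (2 : ℝ≥0∞).toReal := ENNReal.toReal_mono (by norm_num) hz
      _ = 2 := by norm_num
  have hrg2 : ∀ᵐ x ∂m, r (g x) ≤ 2 := by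
    rw [hmz_def] at hr2
    exact (ae_map_iff hg.aemeasurable (hr_meas measurableSet_Iic)).mp hr2
  -- integrability
  have hf_int : Integrable f m :=
    integrable_of_ae_bound hf_meas.aestronglyMeasurable
      (hf2.mono fun x hx => by rw [abs_of_nonneg (hf0 x)]; exact hx)
  have hφf_int : Integrable (fun x => f x * Real.log (f x)) m :=
    integrable_of_ae_bound (hf_meas.mul (Real.measurable_log.comp hf_meas)).aestronglyMeasurable
      (hf2.mono fun x hx => abs_mul_log_le_two (hf0 x) hx)
  have hrg_meas : Measurable (fun x => r (g x)) := hr_meas.comp hg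
  have hrg_int : Integrable (fun x => r (g x)) m :=
    integrable_of_ae_bound hrg_meas.aestronglyMeasurable
      (hrg2.mono fun x hx => by rw [abs_of_nonneg (hr0 (g x))]; exact hx)
  have hφrg_int : Integrable (fun x => r (g x) * Real.log (r (g x))) m :=
    integrable_of_ae_bound
      (hrg_meas.mul (Real.measurable_log.comp hrg_meas)).aestronglyMeasurable
      (hrg2.mono fun x hx => abs_mul_log_le_two (hr0 (g x)) hx)
  -- klDiv as integrals against m
  have hklP : klDiv P m = ∫ x, f x * Real.log (f x) ∂m := by
    rw [klDiv, ← integral_rnDeriv_smul hPm (f := fun x => Real.log (f x))]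
    simp [smul_eq_mul, hf_def]
  have hφr_meas : Measurable (fun z => r z * Real.log (r z)) :=
    hr_meas.mul (Real.measurable_log.comp hr_meas)
  have hklZ : klDiv Pz mz = ∫ x, r (g x) * Real.log (r (g x)) ∂m := by
    rw [klDiv, ← integral_rnDeriv_smul hPzmz (f := fun z => Real.log (r z))]
    have : ∫ z, r z * Real.log (r z) ∂mz = ∫ x, r (g x) * Real.log (r (g x)) ∂m := by
      rw [hmz_def]
      exact integral_map hg.aemeasurable hφr_meas.aestronglyMeasurable
    rw [← this]
    simp [smul_eq_mul, hr_def]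
  -- conditional expectation
  set G := MeasurableSpace.comap g mZ with hG_def
  have hGle : G ≤ mX := hg.comap_le
  have hgG : Measurable[G] g := fun s hs => ⟨s, hs, rfl⟩
  letI : MeasurableSpace X := mX
  have hrg_eq : (fun x => r (g x)) =ᵐ[m] m[f | G] := by
    refine ae_eq_condExp_of_forall_setIntegral_eq hGle hf_int
      (fun s _ _ => hrg_int.integrableOn) ?_ ?_
    · rintro s ⟨B, hB, rfl⟩ _
      rw [hf_def, Measure.setIntegral_toReal_rnDeriv hPm (g ⁻¹' B)]
      have h1 : ∫ x in g ⁻¹' B, r (g x) ∂m = ∫ z in B, r z ∂mz := by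
        rw [hmz_def]
        exact (setIntegral_map hB hr_meas.aestronglyMeasurable hg.aemeasurable).symm
      rw [h1, hr_def, Measure.setIntegral_toReal_rnDeriv hPzmz B, hPz_def,
        map_measureReal_apply hg hB]
    · exact (Measurable.stronglyMeasurable (hr_meas.comp hgG)).aestronglyMeasurable
  set u := m[f | G] with hu_def
  have hu0 : 0 ≤ᵐ[m] u := condExp_nonneg (Filter.Eventually.of_forall hf0)
  -- conditional Jensen via tangent lines
  have key : ∀ q : ℚ, ∀ᵐ x ∂m, 0 < (q : ℝ) →
      u x * (Real.log q + 1) - q ≤ (m[fun x => f x * Real.log (f x) | G]) x := by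
    intro q
    rcases le_or_gt ((q : ℝ)) 0 with hq | hq
    · filter_upwards with x hx; linarith
    have hF1_int : Integrable (fun x => (Real.log q + 1) * f x) m := hf_int.const_mul _
    have hpt : (fun x => (Real.log q + 1) * f x - (q : ℝ)) ≤ᵐ[m]
        fun x => f x * Real.log (f x) :=
      Filter.Eventually.of_forall fun x => by
        show (Real.log (q:ℝ) + 1) * f x - (q:ℝ) ≤ f x * Real.log (f x)
        linarith [log_tangent (hf0 x) hq, mul_comm (f x) (Real.log (q:ℝ) + 1)]
    have hmono := condExp_mono (m := G) (hF1_int.sub (integrable_const (q : ℝ))) hφf_int hpt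
    have h2 : m[fun x => (Real.log q + 1) * f x | G] =ᵐ[m]
        fun x => (Real.log q + 1) * u x := by
      simpa [smul_eq_mul, Pi.smul_def] using condExp_smul (μ := m) (m := G) (Real.log q + 1) f
    have hsub := condExp_sub (m := G) hF1_int (integrable_const (q : ℝ))
      (μ := m) (f := fun x => (Real.log q + 1) * f x) (g := fun _ => (q : ℝ))
    have h3 : m[(fun _ => (q : ℝ)) | G] = fun _ => (q : ℝ) := condExp_const hGle _
    filter_upwards [hmono, hsub, h2] with x hx1 hx2 hx3
    rw [hx2, Pi.sub_apply, hx3, h3] at hx1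
    intro _
    linarith [hx1, mul_comm (u x) (Real.log (q:ℝ) + 1)]
  have hjensen : ∀ᵐ x ∂m, u x * Real.log (u x) ≤ (m[fun x => f x * Real.log (f x) | G]) x := by
    have hall := (ae_all_iff.mpr key)
    filter_upwards [hall, hu0] with x hx hx0
    exact mul_log_le_of_forall_rat hx0 hx
  have hle_ae : (fun x => r (g x) * Real.log (r (g x))) ≤ᵐ[m]
      m[fun x => f x * Real.log (f x) | G] := by
    filter_upwards [hrg_eq, hjensen] with x hx1 hx2
    rw [hx1]
    exact hx2
  calc klDiv Pz mz = ∫ x, r (g x) * Real.log (r (g x)) ∂m := hklZ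
    _ ≤ ∫ x, (m[fun x => f x * Real.log (f x) | G]) x ∂m :=
        integral_mono_ae hφrg_int integrable_condExp hle_ae
    _ = ∫ x, f x * Real.log (f x) ∂m := integral_condExp hGle
    _ = klDiv P m := hklP.symm

instance midM_isProbabilityMeasure {α : Type*} [MeasurableSpace α] (P Q : Measure α)
    [IsProbabilityMeasure P] [IsProbabilityMeasure Q] :
    IsProbabilityMeasure (midM P Q) := by
  constructor
  rw [midM]
  simp [Measure.smul_apply, Measure.add_apply]
  rw [ENNReal.inv_two_add_inv_two]

lemma le_two_smul_midM_left {α : Type*} [MeasurableSpace α] (P Q : Measure α) :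
    P ≤ (2 : ℝ≥0∞) • midM P Q := by
  rw [midM, smul_smul, ENNReal.mul_inv_cancel (by norm_num) (by norm_num), one_smul]
  exact Measure.le_add_right le_rfl

lemma le_two_smul_midM_right {α : Type*} [MeasurableSpace α] (P Q : Measure α) :
    Q ≤ (2 : ℝ≥0∞) • midM P Q := by
  rw [midM, smul_smul, ENNReal.mul_inv_cancel (by norm_num) (by norm_num), one_smul]
  exact Measure.le_add_left le_rfl

/-- data-processing inequality for the Jensen–Shannon distance:
d_JS(P_i^X, P_j^X) ≥ d_JS(P_i^Z, P_j^Z) for pushforwards under a measurable g. -/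
theorem stmt5 {X Z : Type*} [MeasurableSpace X] [MeasurableSpace Z]
    (Pi Pj : Measure X) [IsProbabilityMeasure Pi] [IsProbabilityMeasure Pj]
    (g : X → Z) (hg : Measurable g) :
    jsDist (Pi.map g) (Pj.map g) ≤ jsDist Pi Pj := by
  have hmid : midM (Pi.map g) (Pj.map g) = (midM Pi Pj).map g := by
    rw [midM, midM, Measure.map_smul, Measure.map_add _ _ hg]
  have h1 := kl_map_le Pi (midM Pi Pj) (le_two_smul_midM_left Pi Pj) g hg
  have h2 := kl_map_le Pj (midM Pi Pj) (le_two_smul_midM_right Pi Pj) g hg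
  rw [jsDist, jsDist]
  apply Real.sqrt_le_sqrt
  rw [jsDiv, jsDiv, hmid]
  linarith
end

section
/- Let R_D^{y,a}(f) = E_D[f(X)_1 | Y=y, A=a] with 0 ≤ f(X)_1 ≤ 1. Then for any two domains D_i, D_j and any y,a ∈ {0,1}: R_{D_j}^{y,a}(f) ≤ R_{D_i}^{y,a}(f) + √2 · d_JS(P_{D_j}^{X|Y=y,A=a}, P_{D_i}^{X|Y=y,A=a}). -/
open MeasureTheory ProbabilityTheory Real
open scoped ENNReal

/- Auxiliary lemmas -/


noncomputable def Gk (t : ℝ) : ℝ := (t+1)*Real.log t - 2*(t-1)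
noncomputable def Fk (t : ℝ) : ℝ := 2/3*(t+2)*(t*Real.log t - t + 1) - (t-1)^2

lemma hasDerivAt_Gk {t : ℝ} (ht : 0 < t) :
    HasDerivAt Gk (Real.log t + t⁻¹ - 1) t := by
  have h1 : HasDerivAt (fun s : ℝ => (s+1)*Real.log s)
      (1 * Real.log t + (t+1)*t⁻¹) t :=
    ((hasDerivAt_id t).add_const 1).mul (Real.hasDerivAt_log ht.ne')
  have h2 : HasDerivAt (fun s : ℝ => 2*(s-1)) 2 t := by
    simpa using ((hasDerivAt_id t).sub_const 1).const_mul 2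
  have := h1.sub h2
  refine this.congr_deriv ?_
  field_simp
  ring

lemma hasDerivAt_Fk {t : ℝ} (ht : 0 < t) :
    HasDerivAt Fk (4/3 * Gk t) t := by
  have hφ : HasDerivAt (fun s : ℝ => s*Real.log s - s + 1) (Real.log t) t := by
    have h1 : HasDerivAt (fun s : ℝ => s*Real.log s) (1 * Real.log t + t * t⁻¹) t :=
      (hasDerivAt_id t).mul (Real.hasDerivAt_log ht.ne')
    have := (h1.sub (hasDerivAt_id t)).add_const 1
    refine this.congr_deriv ?_
    field_simp
    ring
  have hu : HasDerivAt (fun s : ℝ => 2/3*(s+2)) (2/3) t := by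
    simpa using ((hasDerivAt_id t).add_const 2).const_mul (2/3 : ℝ)
  have hsq : HasDerivAt (fun s : ℝ => (s-1)^2) (2*(t-1)) t := by
    exact (((hasDerivAt_id t).sub_const 1).pow 2).congr_deriv (by simp)
  have := (hu.mul hφ).sub hsq
  refine this.congr_deriv ?_
  unfold Gk
  ring

lemma Gk_mono : ∀ a b : ℝ, 0 < a → a ≤ b → Gk a ≤ Gk b := by
  intro a b ha hab
  have hmono : MonotoneOn Gk (Set.Icc a b) := by
    apply monotoneOn_of_deriv_nonneg (convex_Icc a b)
    · intro s hs
      exact (hasDerivAt_Gk (lt_of_lt_of_le ha hs.1)).continuousAt.continuousWithinAt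
    · intro s hs
      rw [interior_Icc] at hs
      exact (hasDerivAt_Gk (lt_of_lt_of_le ha hs.1.le)).differentiableAt.differentiableWithinAt
    · intro s hs
      rw [interior_Icc] at hs
      have hs0 : 0 < s := lt_of_lt_of_le ha hs.1.le
      rw [(hasDerivAt_Gk hs0).deriv]
      have := Real.one_sub_inv_le_log_of_pos hs0
      linarith
  exact hmono (Set.left_mem_Icc.2 hab) (Set.right_mem_Icc.2 hab) hab

lemma Fk_one : Fk 1 = 0 := by simp [Fk]

lemma Fk_nonneg {t : ℝ} (ht : 0 ≤ t) : 0 ≤ Fk t := by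
  rcases eq_or_lt_of_le ht with h | ht
  · simp [Fk, ← h]; norm_num
  rcases le_total 1 t with h1 | h1
  · -- t ≥ 1 : F monotone on [1,t]
    have hmono : MonotoneOn Fk (Set.Icc 1 t) := by
      apply monotoneOn_of_deriv_nonneg (convex_Icc 1 t)
      · intro s hs
        exact (hasDerivAt_Fk (lt_of_lt_of_le one_pos hs.1)).continuousAt.continuousWithinAt
      · intro s hs
        rw [interior_Icc] at hs
        exact (hasDerivAt_Fk (lt_trans one_pos hs.1)).differentiableAt.differentiableWithinAt
      · intro s hs
        rw [interior_Icc] at hs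
        rw [(hasDerivAt_Fk (lt_trans one_pos hs.1)).deriv]
        have hG : 0 ≤ Gk s := by
          have := Gk_mono 1 s one_pos hs.1.le
          simpa [Gk] using this
        linarith
    have := hmono (Set.left_mem_Icc.2 h1) (Set.right_mem_Icc.2 h1) h1
    rwa [Fk_one] at this
  · -- t ≤ 1 : F antitone on [t,1]
    have hanti : AntitoneOn Fk (Set.Icc t 1) := by
      apply antitoneOn_of_deriv_nonpos (convex_Icc t 1)
      · intro s hs
        exact (hasDerivAt_Fk (lt_of_lt_of_le ht hs.1)).continuousAt.continuousWithinAt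
      · intro s hs
        rw [interior_Icc] at hs
        exact (hasDerivAt_Fk (lt_of_lt_of_le ht hs.1.le)).differentiableAt.differentiableWithinAt
      · intro s hs
        rw [interior_Icc] at hs
        rw [(hasDerivAt_Fk (lt_of_lt_of_le ht hs.1.le)).deriv]
        have hG : Gk s ≤ 0 := by
          have := Gk_mono s 1 (lt_of_lt_of_le ht hs.1.le) hs.2.le
          simpa [Gk] using this
        linarith
    have := hanti (Set.left_mem_Icc.2 h1) (Set.right_mem_Icc.2 h1) h1
    rwa [Fk_one] at this

lemma keyIneq {t : ℝ} (ht : 0 ≤ t) :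
    (t-1)^2 ≤ 2/3*(t+2)*(t*Real.log t - t + 1) := by
  have := Fk_nonneg ht
  unfold Fk at this
  linarith

lemma amgm (a w l : ℝ) (hw : 0 < w) (hl : 0 < l) :
    |a| ≤ (l * (a^2/w) + w/l)/2 := by
  rw [le_div_iff₀ (by norm_num : (0:ℝ) < 2), mul_div_assoc' l _ w,
    div_add_div _ _ hw.ne' hl.ne', le_div_iff₀ (by positivity : (0:ℝ) < w*l)]
  have h1 := sq_nonneg (l*|a| - w)
  rw [sub_sq, mul_pow, sq_abs] at h1
  linarith

lemma integrable_of_bdd {α : Type*} [MeasurableSpace α] {M : Measure α} [IsFiniteMeasure M]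
    {h : α → ℝ} (hm : AEStronglyMeasurable h M) {C : ℝ} (hb : ∀ᵐ x ∂M, ‖h x‖ ≤ C) :
    Integrable h M :=
  Integrable.mono' (integrable_const C) hm hb

lemma mul_log_bdd {t : ℝ} (h0 : 0 ≤ t) (h2 : t ≤ 2) : |t * Real.log t| ≤ 2 := by
  rcases eq_or_lt_of_le h0 with h | h
  · simp [← h]
  · rw [abs_le]
    constructor
    · have h1 : 1 - t⁻¹ ≤ Real.log t := Real.one_sub_inv_le_log_of_pos h
      have : t * (1 - t⁻¹) ≤ t * Real.log t := by
        exact mul_le_mul_of_nonneg_left h1 h0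
      have ht' : t * (1 - t⁻¹) = t - 1 := by field_simp
      nlinarith
    · have h1 : Real.log t ≤ t - 1 := Real.log_le_sub_one_of_pos h
      nlinarith

private lemma pinsker_aux {α : Type*} [MeasurableSpace α] (M : Measure α) [IsProbabilityMeasure M]
    {g : α → ℝ} (hg : Measurable g) (hg0 : ∀ᵐ x ∂M, 0 ≤ g x) (hg2 : ∀ᵐ x ∂M, g x ≤ 2)
    (hg1 : ∫ x, g x ∂M = 1) :
    (∫ x, |g x - 1| ∂M)^2 ≤ 2 * ∫ x, g x * Real.log (g x) ∂M := by
  set w : α → ℝ := fun x => (g x + 2)/3 with hw_def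
  -- integrability
  have intg : Integrable g M := by
    refine integrable_of_bdd hg.aestronglyMeasurable (C := 2) ?_
    filter_upwards [hg0, hg2] with x h0 h2
    rw [Real.norm_eq_abs, abs_le]; constructor <;> linarith
  have int_abs : Integrable (fun x => |g x - 1|) M := by
    refine integrable_of_bdd (hg.sub measurable_const).abs.aestronglyMeasurable (C := 1) ?_
    filter_upwards [hg0, hg2] with x h0 h2
    rw [Real.norm_eq_abs, abs_abs, abs_le]; constructor <;> linarith
  have hwmeas : Measurable w := (hg.add measurable_const).div_const 3
  have int_w : Integrable w M := (intg.add (integrable_const 2)).div_const 3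
  have int_sq : Integrable (fun x => (g x - 1)^2 / w x) M := by
    refine integrable_of_bdd (((hg.sub measurable_const).pow measurable_const).div
      hwmeas).aestronglyMeasurable (C := 3/2) ?_
    filter_upwards [hg0, hg2] with x h0 h2
    have hwpos : (0:ℝ) < w x := by simp only [hw_def]; positivity
    have h1 : (g x - 1)^2 ≤ 1 := by nlinarith
    have h2' : (2:ℝ)/3 ≤ w x := by simp only [hw_def]; linarith
    rw [Real.norm_eq_abs, abs_of_nonneg (by positivity)]
    calc (g x - 1)^2 / w x ≤ 1 / (2/3) := by
          apply div_le_div₀ (by norm_num) h1 (by norm_num) h2'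
      _ = 3/2 := by norm_num
  have int_glogg : Integrable (fun x => g x * Real.log (g x)) M := by
    refine integrable_of_bdd (hg.mul (Real.measurable_log.comp hg)).aestronglyMeasurable
      (C := 2) ?_
    filter_upwards [hg0, hg2] with x h0 h2
    exact mul_log_bdd h0 h2
  have int_gs : Integrable (fun x => g x * Real.log (g x) - g x) M := int_glogg.sub intg
  have int_phi : Integrable (fun x => g x * Real.log (g x) - g x + 1) M :=
    int_gs.add (integrable_const 1)
  -- ∫ w = 1
  have hw_int : ∫ x, w x ∂M = 1 := by
    simp only [hw_def, div_eq_mul_inv]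
    rw [integral_mul_const, integral_add intg (integrable_const 2), hg1]
    simp
    norm_num
  -- B ≤ 2K
  set B := ∫ x, (g x - 1)^2 / w x ∂M with hB_def
  set K := ∫ x, g x * Real.log (g x) ∂M with hK_def
  have hBK : B ≤ 2 * K := by
    have hpt : ∀ᵐ x ∂M, (g x - 1)^2 / w x ≤ 2*(g x * Real.log (g x) - g x + 1) := by
      filter_upwards [hg0] with x h0
      have hwpos : (0:ℝ) < w x := by simp only [hw_def]; positivity
      rw [div_le_iff₀ hwpos]
      calc (g x - 1)^2 ≤ 2/3*(g x+2)*(g x*Real.log (g x) - g x + 1) := keyIneq h0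
        _ = 2*(g x * Real.log (g x) - g x + 1) * w x := by simp only [hw_def]; ring
    calc B ≤ ∫ x, 2*(g x * Real.log (g x) - g x + 1) ∂M :=
          integral_mono_ae int_sq (int_phi.const_mul 2) hpt
      _ = 2 * (K - 1 + 1) := by
          rw [integral_const_mul, integral_add int_gs (integrable_const 1),
            integral_sub int_glogg intg, hg1]
          simp [hK_def]
      _ = 2 * K := by ring
  -- T ≤ √B then T² ≤ B
  set T := ∫ x, |g x - 1| ∂M with hT_def
  have hT0 : 0 ≤ T := integral_nonneg fun x => abs_nonneg _
  have hB0 : 0 ≤ B := by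
    refine integral_nonneg_of_ae ?_
    filter_upwards [hg0] with x h0
    have hwpos : (0:ℝ) < w x := by simp only [hw_def]; positivity
    positivity
  have hTB : ∀ l : ℝ, 0 < l → T ≤ (l * B + 1/l)/2 := by
    intro l hl
    have hpt : ∀ᵐ x ∂M, |g x - 1| ≤ (l * ((g x - 1)^2 / w x) + w x / l)/2 := by
      filter_upwards [hg0] with x h0
      have hwpos : (0:ℝ) < w x := by simp only [hw_def]; positivity
      exact amgm _ _ _ hwpos hl
    calc T ≤ ∫ x, (l * ((g x - 1)^2 / w x) + w x / l)/2 ∂M :=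
          integral_mono_ae int_abs (((int_sq.const_mul l).add (int_w.div_const l)).div_const 2) hpt
      _ = (l * B + 1/l)/2 := by
          rw [integral_div, integral_add (int_sq.const_mul l) (int_w.div_const l),
            integral_const_mul, integral_div, hw_int]
  have hTsq : T^2 ≤ B := by
    rcases eq_or_lt_of_le hB0 with hB | hB
    · have hT : T = 0 := by
        by_contra h
        have hTpos : 0 < T := lt_of_le_of_ne hT0 (Ne.symm h)
        have := hTB (1/T) (by positivity)
        rw [← hB] at this
        have : T ≤ T/2 := by
          field_simp at this
          nlinarith
        linarith
      rw [hT, ← hB]; norm_num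
    · have := hTB (1/Real.sqrt B) (by positivity)
      have hsB : Real.sqrt B > 0 := Real.sqrt_pos.mpr hB
      have hTle : T ≤ Real.sqrt B := by
        have heq : (1/Real.sqrt B * B + 1/(1/Real.sqrt B))/2 = Real.sqrt B := by
          rw [one_div, one_div, inv_inv, inv_mul_eq_div, Real.div_sqrt]
          ring
        rwa [heq] at this
      calc T^2 ≤ (Real.sqrt B)^2 := pow_le_pow_left₀ hT0 hTle 2
        _ = B := Real.sq_sqrt hB.le
  linarith

/-- group-conditional mean transfer:
R_{D_j}^{y,a}(f) ≤ R_{D_i}^{y,a}(f) + √2·d_JS(P_{D_j}^{X|Y=y,A=a}, P_{D_i}^{X|Y=y,A=a}),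
where νᵢ y a, νⱼ y a are the class-and-group conditional feature distributions. -/
theorem stmt11 {𝒳 : Type*} [MeasurableSpace 𝒳]
    (νi νj : Bool → Bool → Measure 𝒳)
    (hνi : ∀ y a, IsProbabilityMeasure (νi y a))
    (hνj : ∀ y a, IsProbabilityMeasure (νj y a))
    (f1 : 𝒳 → ℝ) (hf : Measurable f1) (hf0 : ∀ x, 0 ≤ f1 x) (hf1 : ∀ x, f1 x ≤ 1) :
    ∀ y a : Bool,
      ∫ x, f1 x ∂(νj y a)
        ≤ ∫ x, f1 x ∂(νi y a) + Real.sqrt 2 * jsDist (νj y a) (νi y a) := by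
  intro y a
  set P := νj y a with hP_def
  set Q := νi y a with hQ_def
  haveI : IsProbabilityMeasure P := hνj y a
  haveI : IsProbabilityMeasure Q := hνi y a
  set M := midM P Q with hM_def
  haveI hMprob : IsProbabilityMeasure M := by
    constructor
    rw [hM_def, midM, Measure.smul_apply, Measure.add_apply, measure_univ, measure_univ,
      smul_eq_mul]
    rw [one_add_one_eq_two, ENNReal.inv_mul_cancel two_ne_zero ENNReal.ofNat_ne_top]
  have h2M : (2:ℝ≥0∞) • M = P + Q := by
    rw [hM_def, midM, smul_smul, ENNReal.mul_inv_cancel two_ne_zero ENNReal.ofNat_ne_top, one_smul]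
  have hPM : P ≪ M := by
    refine Measure.AbsolutelyContinuous.mk fun s hms hs => ?_
    rw [hM_def, midM, Measure.smul_apply, smul_eq_mul, mul_eq_zero] at hs
    rcases hs with h | h
    · exact absurd h (by simp)
    · rw [Measure.add_apply, add_eq_zero] at h
      exact h.1
  have hQM : Q ≪ M := by
    refine Measure.AbsolutelyContinuous.mk fun s hms hs => ?_
    rw [hM_def, midM, Measure.smul_apply, smul_eq_mul, mul_eq_zero] at hs
    rcases hs with h | h
    · exact absurd h (by simp)
    · rw [Measure.add_apply, add_eq_zero] at h
      exact h.2
  set g : 𝒳 → ℝ := fun x => (P.rnDeriv M x).toReal with hg_def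
  set h : 𝒳 → ℝ := fun x => (Q.rnDeriv M x).toReal with hh_def
  have hgmeas : Measurable g := (Measure.measurable_rnDeriv P M).ennreal_toReal
  have hhmeas : Measurable h := (Measure.measurable_rnDeriv Q M).ennreal_toReal
  -- sum of densities is 2 a.e.
  have hsum : (fun x => P.rnDeriv M x + Q.rnDeriv M x) =ᵐ[M] (fun _ => (2:ℝ≥0∞)) := by
    have h1 := Measure.rnDeriv_add P Q M
    have h2 : ((2:ℝ≥0∞) • M).rnDeriv M =ᵐ[M] fun _ => (2:ℝ≥0∞) := by
      have h3 := Measure.rnDeriv_smul_left_of_ne_top M M (ENNReal.ofNat_ne_top (n := 2))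
      have h4 := Measure.rnDeriv_self M
      filter_upwards [h3, h4] with x h3x h4x
      simp only [h3x, Pi.smul_apply, h4x, smul_eq_mul, mul_one]
    rw [h2M] at h2
    filter_upwards [h1, h2] with x h1x h2x
    simp only [Pi.add_apply] at h1x
    rw [← h1x, h2x]
  have hPlt := Measure.rnDeriv_lt_top P M
  have hQlt := Measure.rnDeriv_lt_top Q M
  have haefacts : ∀ᵐ x ∂M, g x + h x = 2 ∧ 0 ≤ g x ∧ g x ≤ 2 ∧ 0 ≤ h x ∧ h x ≤ 2 := by
    filter_upwards [hsum, hPlt, hQlt] with x hx hpx hqx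
    have hgh : g x + h x = 2 := by
      rw [hg_def, hh_def]
      simp only
      rw [← ENNReal.toReal_add hpx.ne hqx.ne, hx]
      norm_num
    have hg0 : 0 ≤ g x := ENNReal.toReal_nonneg
    have hh0 : 0 ≤ h x := ENNReal.toReal_nonneg
    exact ⟨hgh, hg0, by linarith, hh0, by linarith⟩
  have hg0 : ∀ᵐ x ∂M, 0 ≤ g x := by filter_upwards [haefacts] with x hx using hx.2.1
  have hg2 : ∀ᵐ x ∂M, g x ≤ 2 := by filter_upwards [haefacts] with x hx using hx.2.2.1
  have hh0 : ∀ᵐ x ∂M, 0 ≤ h x := by filter_upwards [haefacts] with x hx using hx.2.2.2.1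
  have hh2 : ∀ᵐ x ∂M, h x ≤ 2 := by filter_upwards [haefacts] with x hx using hx.2.2.2.2
  have hg1 : ∫ x, g x ∂M = 1 := by
    rw [hg_def]
    rw [Measure.integral_toReal_rnDeriv hPM, probReal_univ]
  have hh1 : ∫ x, h x ∂M = 1 := by
    rw [hh_def]
    rw [Measure.integral_toReal_rnDeriv hQM, probReal_univ]
  -- integral conversions
  have hint1 : ∫ x, f1 x ∂P = ∫ x, g x * f1 x ∂M := by
    rw [← integral_rnDeriv_smul hPM (f := f1)]
    simp [smul_eq_mul, hg_def]
  have hint2 : ∫ x, f1 x ∂Q = ∫ x, h x * f1 x ∂M := by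
    rw [← integral_rnDeriv_smul hQM (f := f1)]
    simp [smul_eq_mul, hh_def]
  have hklP : klDiv P M = ∫ x, g x * Real.log (g x) ∂M := by
    rw [klDiv, ← integral_rnDeriv_smul hPM (f := fun x => Real.log (g x))]
    simp [smul_eq_mul, hg_def]
  have hklQ : klDiv Q M = ∫ x, h x * Real.log (h x) ∂M := by
    rw [klDiv, ← integral_rnDeriv_smul hQM (f := fun x => Real.log (h x))]
    simp [smul_eq_mul, hh_def]
  -- Pinsker for both
  have hTP := pinsker_aux M hgmeas hg0 hg2 hg1
  have hTQ := pinsker_aux M hhmeas hh0 hh2 hh1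
  rw [← hklP] at hTP
  rw [← hklQ] at hTQ
  set TP := ∫ x, |g x - 1| ∂M with hTP_def
  have hTPQ : TP = ∫ x, |h x - 1| ∂M := by
    apply integral_congr_ae
    filter_upwards [haefacts] with x hx
    have : g x - 1 = -(h x - 1) := by linarith [hx.1]
    rw [this, abs_neg]
  rw [← hTPQ] at hTQ
  -- integrabilities
  have intg : Integrable g M := by
    refine integrable_of_bdd hgmeas.aestronglyMeasurable (C := 2) ?_
    filter_upwards [hg0, hg2] with x h0 h2
    rw [Real.norm_eq_abs, abs_le]; constructor <;> linarith
  have int_abs : Integrable (fun x => |g x - 1|) M := by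
    refine integrable_of_bdd (hgmeas.sub measurable_const).abs.aestronglyMeasurable (C := 1) ?_
    filter_upwards [hg0, hg2] with x h0 h2
    rw [Real.norm_eq_abs, abs_abs, abs_le]; constructor <;> linarith
  have int_gf : Integrable (fun x => g x * f1 x) M := by
    refine integrable_of_bdd (hgmeas.mul hf).aestronglyMeasurable (C := 2) ?_
    filter_upwards [hg0, hg2] with x h0 h2
    rw [Real.norm_eq_abs, abs_le]
    constructor <;> nlinarith [hf0 x, hf1 x]
  have int_hf : Integrable (fun x => h x * f1 x) M := by
    refine integrable_of_bdd (hhmeas.mul hf).aestronglyMeasurable (C := 2) ?_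
    filter_upwards [hh0, hh2] with x h0 h2
    rw [Real.norm_eq_abs, abs_le]
    constructor <;> nlinarith [hf0 x, hf1 x]
  have int_gm1 : Integrable (fun x => g x - 1) M := intg.sub (integrable_const 1)
  -- key bound: δ ≤ TP
  have hkey : ∫ x, f1 x ∂P - ∫ x, f1 x ∂Q ≤ TP := by
    rw [hint1, hint2, ← integral_sub int_gf int_hf]
    have hmono : ∫ x, g x * f1 x - h x * f1 x ∂M ≤ ∫ x, |g x - 1| + (g x - 1) ∂M := by
      apply integral_mono_ae (int_gf.sub int_hf) (int_abs.add int_gm1)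
      filter_upwards [haefacts] with x hx
      obtain ⟨hgh, h0, h2, _, _⟩ := hx
      show g x * f1 x - h x * f1 x ≤ |g x - 1| + (g x - 1)
      rcases le_total 1 (g x) with h1 | h1
      · rw [abs_of_nonneg (by linarith)]
        nlinarith [hf0 x, hf1 x]
      · rw [abs_of_nonpos (by linarith)]
        nlinarith [hf0 x, hf1 x]
    calc ∫ x, g x * f1 x - h x * f1 x ∂M ≤ ∫ x, |g x - 1| + (g x - 1) ∂M := hmono
      _ = TP + (∫ x, g x ∂M - 1) := by
          rw [integral_add int_abs int_gm1, integral_sub intg (integrable_const 1)]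
          simp [hTP_def]
      _ = TP := by rw [hg1]; ring
  -- combine
  have hTP0 : 0 ≤ TP := integral_nonneg fun x => abs_nonneg _
  have hjs : TP^2 ≤ 2 * jsDiv P Q := by
    rw [jsDiv, ← hM_def]
    ring_nf
    nlinarith [hTP, hTQ]
  have hfinal : TP ≤ Real.sqrt 2 * jsDist P Q := by
    rw [jsDist, ← Real.sqrt_mul (by norm_num : (0:ℝ) ≤ 2)]
    calc TP = Real.sqrt (TP^2) := (Real.sqrt_sq hTP0).symm
      _ ≤ Real.sqrt (2 * jsDiv P Q) := Real.sqrt_le_sqrt hjs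
  linarith
end

section
/- Suppose L(f(x),y) = ∑_{ŷ} f(x)_ŷ · ℓ(ŷ,y) with ℓ(ŷ,y) ≥ c > 0 for ŷ ≠ y and ℓ(y,y)=0. Then for any domain D, E_D[L(f(X),Y)] ≥ (2c/|𝒴|)·d_JS(P_D^Y, P_D^{Ŷ})⁴, where Ŷ is the label sampled from the predictor f. -/
open MeasureTheory ProbabilityTheory Real
open scoped ENNReal

/-- KL divergence between finitely supported probability vectors (natural log). -/
noncomputable def klPMF {K : ℕ} (p q : Fin K → ℝ) : ℝ :=
  ∑ y, p y * Real.log (p y / q y)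

/-- Jensen–Shannon divergence between probability vectors. -/
noncomputable def jsPMF {K : ℕ} (p q : Fin K → ℝ) : ℝ :=
  2⁻¹ * klPMF p (fun y => (p y + q y) / 2) + 2⁻¹ * klPMF q (fun y => (p y + q y) / 2)

/-- Jensen–Shannon distance between probability vectors. -/
noncomputable def jsDistPMF {K : ℕ} (p q : Fin K → ℝ) : ℝ :=
  Real.sqrt (jsPMF p q)

lemma kl_term_bound {a b : ℝ} (ha : 0 ≤ a) (hb : 0 ≤ b) :
    a * Real.log (a / ((a + b) / 2)) + b * Real.log (b / ((a + b) / 2)) ≤ |a - b| := by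
  rcases eq_or_lt_of_le (add_nonneg ha hb) with h0 | hpos
  · have ha0 : a = 0 := by linarith [ha, hb]
    have hb0 : b = 0 := by linarith [ha, hb]
    simp [ha0, hb0]
  · set m : ℝ := (a + b) / 2 with hm
    have hmpos : 0 < m := by positivity
    have key : ∀ t : ℝ, 0 ≤ t → t * Real.log (t / m) ≤ t * (t / m - 1) := by
      intro t ht
      rcases ht.eq_or_lt with h | h
      · simp [← h]
      · exact mul_le_mul_of_nonneg_left
          (Real.log_le_sub_one_of_pos (div_pos h hmpos)) ht
    have h1 := key a ha
    have h2 := key b hb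
    have heq : a * (a / m - 1) + b * (b / m - 1) = (a - b) ^ 2 / (a + b) := by
      rw [hm]; field_simp; ring
    have habs : (a - b) ^ 2 / (a + b) ≤ |a - b| := by
      rw [div_le_iff₀ hpos]
      have h3 : |a - b| ≤ a + b := abs_le.mpr ⟨by linarith, by linarith⟩
      calc (a - b) ^ 2 = |a - b| * |a - b| := by rw [← sq_abs, sq]
        _ ≤ |a - b| * (a + b) := mul_le_mul_of_nonneg_left h3 (abs_nonneg _)
    linarith

lemma jsPMF_le_l1 {K : ℕ} (p q : Fin K → ℝ) (hp : ∀ y, 0 ≤ p y) (hq : ∀ y, 0 ≤ q y) :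
    jsPMF p q ≤ 2⁻¹ * ∑ y, |p y - q y| := by
  simp only [jsPMF, klPMF]
  have hsum : (∑ y, p y * Real.log (p y / ((p y + q y) / 2)))
      + ∑ y, q y * Real.log (q y / ((p y + q y) / 2)) ≤ ∑ y, |p y - q y| := by
    rw [← Finset.sum_add_distrib]
    exact Finset.sum_le_sum fun y _ => kl_term_bound (hp y) (hq y)
  linarith

/-- per-domain loss lower bound. For L(f(x),y) = ∑_ŷ f(x)_ŷ ℓ(ŷ,y)
with ℓ ≥ c off the diagonal and 0 on it, E_D[L(f(X),Y)] ≥ (2c/|𝒴|)·d_JS(P_D^Y, P_D^Ŷ)⁴,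
where fD is the (stochastic) labeling function of domain D, P_D^Y(y) = E_X[fD(X)_y]
and P_D^Ŷ(ŷ) = E_X[f(X)_ŷ]. -/
theorem stmt16 {𝒳 : Type*} [MeasurableSpace 𝒳]
    (μ : Measure 𝒳) [IsProbabilityMeasure μ]
    {K : ℕ} (hK : 0 < K)
    (f fD : 𝒳 → Fin K → ℝ)
    (hf : ∀ x, (∀ yh, 0 ≤ f x yh) ∧ ∑ yh, f x yh = 1)
    (hfD : ∀ x, (∀ y, 0 ≤ fD x y) ∧ ∑ y, fD x y = 1)
    (hfm : ∀ yh, Integrable (fun x => f x yh) μ)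
    (hfDm : ∀ y, Integrable (fun x => fD x y) μ)
    (ℓ : Fin K → Fin K → ℝ) (c : ℝ) (hc : 0 < c)
    (hℓ : ∀ yh y, yh ≠ y → c ≤ ℓ yh y) (hℓdiag : ∀ y, ℓ y y = 0)
    (hint : Integrable (fun x => ∑ y, fD x y * ∑ yh, f x yh * ℓ yh y) μ) :
    (2 * c / (K : ℝ)) *
        (jsDistPMF (fun y => ∫ x, fD x y ∂μ) (fun yh => ∫ x, f x yh ∂μ)) ^ 4
      ≤ ∫ x, ∑ y, fD x y * ∑ yh, f x yh * ℓ yh y ∂μ := by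
  have hKpos : (0:ℝ) < K := Nat.cast_pos.mpr hK
  set p : Fin K → ℝ := fun y => ∫ x, fD x y ∂μ with hpdef
  set q : Fin K → ℝ := fun yh => ∫ x, f x yh ∂μ with hqdef
  set L : 𝒳 → ℝ := fun x => ∑ y, fD x y * ∑ yh, f x yh * ℓ yh y with hLdef
  -- component bounds
  have hf1 : ∀ x y, f x y ≤ 1 := fun x y => by
    have := Finset.single_le_sum (f := fun i => f x i) (fun i _ => (hf x).1 i)
      (Finset.mem_univ y)
    rw [(hf x).2] at this; exact this
  have hfD1 : ∀ x y, fD x y ≤ 1 := fun x y => by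
    have := Finset.single_le_sum (f := fun i => fD x i) (fun i _ => (hfD x).1 i)
      (Finset.mem_univ y)
    rw [(hfD x).2] at this; exact this
  set g : 𝒳 → ℝ := fun x => ∑ y, |fD x y - f x y| with hgdef
  have hg0 : ∀ x, 0 ≤ g x := fun x => Finset.sum_nonneg fun i _ => abs_nonneg _
  have hgle2 : ∀ x, g x ≤ 2 := by
    intro x
    calc g x ≤ ∑ y, (fD x y + f x y) := Finset.sum_le_sum fun y _ =>
          abs_le.mpr ⟨by linarith [(hfD x).1 y, (hf x).1 y], by linarith [(hfD x).1 y, (hf x).1 y]⟩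
      _ = 2 := by rw [Finset.sum_add_distrib, (hfD x).2, (hf x).2]; norm_num
  have hgint : Integrable g μ :=
    integrable_finset_sum _ fun y _ => ((hfDm y).sub (hfm y)).abs
  have hgmem : MemLp g 2 μ :=
    MemLp.of_bound hgint.aestronglyMeasurable 2
      (ae_of_all _ fun x => by
        rw [Real.norm_eq_abs, abs_of_nonneg (hg0 x)]; exact hgle2 x)
  have hg2int : Integrable (fun x => g x ^ 2) μ := hgmem.integrable_sq
  -- Jensen
  have hJensen : (∫ x, g x ∂μ) ^ 2 ≤ ∫ x, g x ^ 2 ∂μ := by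
    have hv := variance_nonneg g μ
    rw [variance_eq_sub hgmem] at hv
    simp only [Pi.pow_apply] at hv
    linarith
  -- S ≤ ∫ g
  set S : ℝ := ∑ y, |p y - q y| with hSdef
  have hS0 : 0 ≤ S := Finset.sum_nonneg fun i _ => abs_nonneg _
  have hS : S ≤ ∫ x, g x ∂μ := by
    have h1 : ∀ y : Fin K, |p y - q y| ≤ ∫ x, |fD x y - f x y| ∂μ := by
      intro y
      rw [hpdef, hqdef]
      simp only
      rw [← integral_sub (hfDm y) (hfm y)]
      calc |∫ x, (fD x y - f x y) ∂μ| = ‖∫ x, (fD x y - f x y) ∂μ‖ := (Real.norm_eq_abs _).symm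
        _ ≤ ∫ x, ‖fD x y - f x y‖ ∂μ := norm_integral_le_integral_norm _
        _ = ∫ x, |fD x y - f x y| ∂μ := by simp [Real.norm_eq_abs]
    calc S ≤ ∑ y, ∫ x, |fD x y - f x y| ∂μ := Finset.sum_le_sum fun y _ => h1 y
      _ = ∫ x, g x ∂μ :=
        (integral_finset_sum _ fun y _ => ((hfDm y).sub (hfm y)).abs).symm
  -- pointwise loss lower bound
  have hpt : ∀ x, g x ^ 2 ≤ (2 * K / c) * L x := by
    intro x
    set T : ℝ := ∑ y, f x y * fD x y with hTdef
    have hCS : g x ^ 2 ≤ K * ∑ y, (fD x y - f x y) ^ 2 := by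
      have := sq_sum_le_card_mul_sum_sq (s := (Finset.univ : Finset (Fin K)))
        (f := fun y => |fD x y - f x y|)
      simpa [sq_abs] using this
    have hsq : ∑ y, (fD x y - f x y) ^ 2 ≤ 2 - 2 * T := by
      have hterm : ∀ y, (fD x y - f x y) ^ 2 ≤ fD x y + f x y - 2 * (f x y * fD x y) := by
        intro y
        nlinarith [(hf x).1 y, (hfD x).1 y, hf1 x y, hfD1 x y]
      calc ∑ y, (fD x y - f x y) ^ 2
          ≤ ∑ y, (fD x y + f x y - 2 * (f x y * fD x y)) := Finset.sum_le_sum fun y _ => hterm y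
        _ = 2 - 2 * T := by
            rw [Finset.sum_sub_distrib, Finset.sum_add_distrib, (hfD x).2, (hf x).2,
              ← Finset.mul_sum, ← hTdef]; ring
    have hloss : c * (1 - T) ≤ L x := by
      have hterm : ∀ y : Fin K, fD x y * (c * (1 - f x y)) ≤ fD x y * ∑ yh, f x yh * ℓ yh y := by
        intro y
        apply mul_le_mul_of_nonneg_left _ ((hfD x).1 y)
        have e1 : ∑ yh ∈ Finset.univ.erase y, f x yh + f x y = 1 := by
          rw [Finset.sum_erase_add _ _ (Finset.mem_univ y)]; exact (hf x).2
        have e2 : ∑ yh ∈ Finset.univ.erase y, f x yh * ℓ yh y + f x y * ℓ y y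
            = ∑ yh, f x yh * ℓ yh y :=
          Finset.sum_erase_add _ _ (Finset.mem_univ y)
        have e3 : ∑ yh ∈ Finset.univ.erase y, f x yh * c
            ≤ ∑ yh ∈ Finset.univ.erase y, f x yh * ℓ yh y :=
          Finset.sum_le_sum fun yh hyh =>
            mul_le_mul_of_nonneg_left (hℓ yh y (Finset.ne_of_mem_erase hyh)) ((hf x).1 yh)
        have e4 : ∑ yh ∈ Finset.univ.erase y, f x yh * c
            = (1 - f x y) * c := by
          rw [← Finset.sum_mul]; congr 1; linarith
        rw [hℓdiag y, mul_zero, add_zero] at e2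
        calc c * (1 - f x y) = (1 - f x y) * c := by ring
          _ ≤ ∑ yh ∈ Finset.univ.erase y, f x yh * ℓ yh y := e4 ▸ e3
          _ = ∑ yh, f x yh * ℓ yh y := e2
      have hsum1 : ∑ y, fD x y * (c * (1 - f x y))
          = c * (∑ y, fD x y) - c * ∑ y, f x y * fD x y := by
        rw [Finset.mul_sum, Finset.mul_sum, ← Finset.sum_sub_distrib]
        exact Finset.sum_congr rfl fun y _ => by ring
      calc c * (1 - T) = ∑ y, fD x y * (c * (1 - f x y)) := by
            rw [hsum1, (hfD x).2, ← hTdef]; ring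
        _ ≤ L x := Finset.sum_le_sum fun y _ => hterm y
    calc g x ^ 2 ≤ K * (2 - 2 * T) := hCS.trans (by
          exact mul_le_mul_of_nonneg_left hsq hKpos.le)
      _ = (2 * K / c) * (c * (1 - T)) := by field_simp
      _ ≤ (2 * K / c) * L x := mul_le_mul_of_nonneg_left hloss (by positivity)
  -- integrate
  have hIg2 : ∫ x, g x ^ 2 ∂μ ≤ (2 * K / c) * ∫ x, L x ∂μ := by
    calc ∫ x, g x ^ 2 ∂μ ≤ ∫ x, (2 * K / c) * L x ∂μ :=
        integral_mono hg2int (hint.const_mul _) hpt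
      _ = (2 * K / c) * ∫ x, L x ∂μ := integral_const_mul _ _
  -- JS side
  have hp0 : ∀ y, 0 ≤ p y := fun y => integral_nonneg fun x => (hfD x).1 y
  have hq0 : ∀ y, 0 ≤ q y := fun y => integral_nonneg fun x => (hf x).1 y
  have hjs2 : (jsDistPMF p q) ^ 2 ≤ 2⁻¹ * S := by
    rcases le_or_gt 0 (jsPMF p q) with h | h
    · rw [jsDistPMF, Real.sq_sqrt h]
      exact jsPMF_le_l1 p q hp0 hq0
    · rw [jsDistPMF, Real.sqrt_eq_zero'.mpr h.le]
      nlinarith [hS0]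
  -- assemble
  have hjs4 : (jsDistPMF p q) ^ 4 ≤ (2⁻¹ * S) ^ 2 := by
    calc (jsDistPMF p q) ^ 4 = ((jsDistPMF p q) ^ 2) ^ 2 := by ring
      _ ≤ (2⁻¹ * S) ^ 2 := pow_le_pow_left₀ (sq_nonneg _) hjs2 2
  have hSsq : S ^ 2 ≤ (∫ x, g x ∂μ) ^ 2 := pow_le_pow_left₀ hS0 hS 2
  have hfinal : (jsDistPMF p q) ^ 4 ≤ 4⁻¹ * ((2 * K / c) * ∫ x, L x ∂μ) := by
    have : (2⁻¹ * S) ^ 2 = 4⁻¹ * S ^ 2 := by ring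
    nlinarith [hjs4, hSsq, hJensen, hIg2]
  have hcK : (0:ℝ) < 2 * c / K := by positivity
  calc (2 * c / (K:ℝ)) * (jsDistPMF p q) ^ 4
      ≤ (2 * c / K) * (4⁻¹ * ((2 * K / c) * ∫ x, L x ∂μ)) :=
        mul_le_mul_of_nonneg_left hfinal hcK.le
    _ = ∫ x, L x ∂μ := by field_simp; ring
end
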